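/- Let ℓ₁, ℓ₂ > 0 be real, β₁, β₂ ∈ ℝ, and k ∈ ℂ with k ≠ 0. There exists a nonzero tuple (a₁, b₁, a₂, b₂, c₁, c₂) ∈ ℂ⁶ satisfying the linear system: a₁ − b₁ = c₁, a₂ − b₂ = c₁, ikβ₁·c₁ = a₁ + b₁ + a₂ + b₂ + c₁, −a₁e^{ikℓ₁} + b₁e^{−ikℓ₁} = c₂, −a₂e^{ikℓ₂} + b₂e^{−ikℓ₂} = c₂, and ikβ₂·c₂ = a₁e^{ikℓ₁} + b₁e^{−ikℓ₁} + a₂e^{ikℓ₂} + b₂e^{−ikℓ₂} + c₂, if and only if [(β₁ + β₂)k + 2i]·sin(k(ℓ₁+ℓ₂)) + 2·(1 − cos(kℓ₁)·cos(kℓ₂)) + (3 − β₁β₂k² − ik(β₁ + β₂))·sin(kℓ₁)·sin(kℓ₂) = 0. -/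

import Mathlib

open Complex

private lemma sin_expand (z : ℂ) :
    Complex.sin z = (Complex.exp (I * z) - Complex.exp (-(I * z))) * I / (-2) := by
  rw [Complex.sin, show -z * I = -(I * z) by ring, show z * I = I * z by ring]
  ring

private lemma cos_expand (z : ℂ) :
    Complex.cos z = (Complex.exp (I * z) + Complex.exp (-(I * z))) / 2 := by
  rw [Complex.cos, show -z * I = -(I * z) by ring, show z * I = I * z by ring]

set_option maxHeartbeats 1600000 in
/-- Resonance condition for a loop of two edges of lengths `ℓ₁`, `ℓ₂` with one lead at
each of the two vertices and `δ′_s`-couplings of strengths `β₁`, `β₂`: a nontrivial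
generalized eigenfunction exists iff
`[(β₁+β₂)k + 2i] sin k(ℓ₁+ℓ₂) + 2(1 - cos kℓ₁ cos kℓ₂)
+ (3 - β₁β₂k² - ik(β₁+β₂)) sin kℓ₁ sin kℓ₂ = 0`. -/
theorem stmt_15 (ℓ₁ ℓ₂ : ℝ) (hℓ₁ : 0 < ℓ₁) (hℓ₂ : 0 < ℓ₂) (β₁ β₂ : ℝ) (k : ℂ)
    (hk : k ≠ 0) :
    (∃ a₁ b₁ a₂ b₂ c₁ c₂ : ℂ,
      (a₁, b₁, a₂, b₂, c₁, c₂) ≠ (0, 0, 0, 0, 0, 0) ∧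
      a₁ - b₁ = c₁ ∧
      a₂ - b₂ = c₁ ∧
      Complex.I * k * β₁ * c₁ = a₁ + b₁ + a₂ + b₂ + c₁ ∧
      -(a₁ * Complex.exp (Complex.I * k * ℓ₁)) + b₁ * Complex.exp (-(Complex.I * k * ℓ₁))
        = c₂ ∧
      -(a₂ * Complex.exp (Complex.I * k * ℓ₂)) + b₂ * Complex.exp (-(Complex.I * k * ℓ₂))
        = c₂ ∧
      Complex.I * k * β₂ * c₂
        = a₁ * Complex.exp (Complex.I * k * ℓ₁) + b₁ * Complex.exp (-(Complex.I * k * ℓ₁))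
          + a₂ * Complex.exp (Complex.I * k * ℓ₂) + b₂ * Complex.exp (-(Complex.I * k * ℓ₂))
          + c₂)
    ↔ (((β₁ : ℂ) + β₂) * k + 2 * Complex.I) * Complex.sin (k * (ℓ₁ + ℓ₂))
      + 2 * (1 - Complex.cos (k * ℓ₁) * Complex.cos (k * ℓ₂))
      + (3 - (β₁ : ℂ) * β₂ * k ^ 2 - Complex.I * k * ((β₁ : ℂ) + β₂))
        * Complex.sin (k * ℓ₁) * Complex.sin (k * ℓ₂) = 0 := by
  set E₁ : ℂ := Complex.exp (Complex.I * k * ℓ₁) with hE₁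
  set E₂ : ℂ := Complex.exp (Complex.I * k * ℓ₂) with hE₂
  set F₁ : ℂ := Complex.exp (-(Complex.I * k * ℓ₁)) with hF₁
  set F₂ : ℂ := Complex.exp (-(Complex.I * k * ℓ₂)) with hF₂
  have hEF₁ : E₁ * F₁ = 1 := by
    rw [hE₁, hF₁, ← Complex.exp_add]; simp
  have hEF₂ : E₂ * F₂ = 1 := by
    rw [hE₂, hF₂, ← Complex.exp_add]; simp
  have hE₁0 : E₁ ≠ 0 := Complex.exp_ne_zero _
  have hE₂0 : E₂ ≠ 0 := Complex.exp_ne_zero _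
  have hF₁E : F₁ = E₁⁻¹ := by field_simp [← hEF₁]; linear_combination hEF₁
  have hF₂E : F₂ = E₂⁻¹ := by field_simp [← hEF₂]; linear_combination hEF₂
  set M : Matrix (Fin 4) (Fin 4) ℂ :=
    !![1, -1, -1, 1;
       Complex.I * k * β₁ - 2, -(Complex.I * k * β₁), -1, -1;
       -E₁, F₁, E₂, -F₂;
       -(Complex.I * k * β₂ * E₁), Complex.I * k * β₂ * F₁ - 2 * F₁, -E₂, -F₂] with hM
  have key : (∃ a₁ b₁ a₂ b₂ c₁ c₂ : ℂ,
      (a₁, b₁, a₂, b₂, c₁, c₂) ≠ (0, 0, 0, 0, 0, 0) ∧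
      a₁ - b₁ = c₁ ∧ a₂ - b₂ = c₁ ∧
      Complex.I * k * β₁ * c₁ = a₁ + b₁ + a₂ + b₂ + c₁ ∧
      -(a₁ * E₁) + b₁ * F₁ = c₂ ∧
      -(a₂ * E₂) + b₂ * F₂ = c₂ ∧
      Complex.I * k * β₂ * c₂ = a₁ * E₁ + b₁ * F₁ + a₂ * E₂ + b₂ * F₂ + c₂)
      ↔ ∃ v ≠ 0, M.mulVec v = 0 := by
    constructor
    · rintro ⟨a₁, b₁, a₂, b₂, c₁, c₂, hne, h1, h2, h3, h4, h5, h6⟩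
      refine ⟨![a₁, b₁, a₂, b₂], ?_, ?_⟩
      · intro h0
        apply hne
        have ha₁ : a₁ = 0 := congrFun h0 0
        have hb₁ : b₁ = 0 := congrFun h0 1
        have ha₂ : a₂ = 0 := congrFun h0 2
        have hb₂ : b₂ = 0 := congrFun h0 3
        have hc₁ : c₁ = 0 := by rw [← h1, ha₁, hb₁, sub_zero]
        have hc₂ : c₂ = 0 := by rw [← h4, ha₁, hb₁]; ring
        simp [ha₁, hb₁, ha₂, hb₂, hc₁, hc₂]
      · have e0 : M.mulVec ![a₁, b₁, a₂, b₂] 0 = 0 := by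
          simp only [hM, Matrix.mulVec, dotProduct, Fin.sum_univ_four,
            Matrix.cons_val', Matrix.cons_val_zero, Matrix.cons_val_one, Matrix.head_cons,
            Matrix.empty_val', Matrix.cons_val_fin_one, Matrix.head_fin_const,
            Matrix.cons_val_two, Matrix.tail_cons, Matrix.cons_val_three,
            Matrix.of_apply, Matrix.cons_val_succ]
          linear_combination h1 - h2
        have e1 : M.mulVec ![a₁, b₁, a₂, b₂] 1 = 0 := by
          simp only [hM, Matrix.mulVec, dotProduct, Fin.sum_univ_four,
            Matrix.cons_val', Matrix.cons_val_zero, Matrix.cons_val_one, Matrix.head_cons,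
            Matrix.empty_val', Matrix.cons_val_fin_one, Matrix.head_fin_const,
            Matrix.cons_val_two, Matrix.tail_cons, Matrix.cons_val_three,
            Matrix.of_apply, Matrix.cons_val_succ]
          linear_combination (Complex.I * k * β₁ - 1) * h1 + h3
        have e2 : M.mulVec ![a₁, b₁, a₂, b₂] 2 = 0 := by
          simp only [hM, Matrix.mulVec, dotProduct, Fin.sum_univ_four,
            Matrix.cons_val', Matrix.cons_val_zero, Matrix.cons_val_one, Matrix.head_cons,
            Matrix.empty_val', Matrix.cons_val_fin_one, Matrix.head_fin_const,
            Matrix.cons_val_two, Matrix.tail_cons, Matrix.cons_val_three,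
            Matrix.of_apply, Matrix.cons_val_succ]
          linear_combination h4 - h5
        have e3 : M.mulVec ![a₁, b₁, a₂, b₂] 3 = 0 := by
          simp only [hM, Matrix.mulVec, dotProduct, Fin.sum_univ_four,
            Matrix.cons_val', Matrix.cons_val_zero, Matrix.cons_val_one, Matrix.head_cons,
            Matrix.empty_val', Matrix.cons_val_fin_one, Matrix.head_fin_const,
            Matrix.cons_val_two, Matrix.tail_cons, Matrix.cons_val_three,
            Matrix.of_apply, Matrix.cons_val_succ]
          linear_combination (Complex.I * k * β₂ - 1) * h4 + h6
        funext i
        fin_cases i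
        · exact e0
        · exact e1
        · exact e2
        · exact e3
    · rintro ⟨v, hv, hMv⟩
      refine ⟨v 0, v 1, v 2, v 3, v 0 - v 1,
        -(v 0 * E₁) + v 1 * F₁, ?_, rfl, ?_, ?_, rfl, ?_, ?_⟩
      · intro h0
        apply hv
        have h := Prod.mk.injEq (v 0) _ 0 _ ▸ h0
        simp only [Prod.mk.injEq] at h0
        funext i
        fin_cases i <;> simp [h0.1, h0.2.1, h0.2.2.1, h0.2.2.2.1]
      · have := congrFun hMv 0
        simp only [hM, Matrix.mulVec, dotProduct, Fin.sum_univ_four,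
          Matrix.cons_val', Matrix.cons_val_zero, Matrix.cons_val_one, Matrix.head_cons,
          Matrix.empty_val', Matrix.cons_val_fin_one, Matrix.head_fin_const,
          Matrix.cons_val_two, Matrix.tail_cons, Matrix.cons_val_three,
          Matrix.of_apply, Matrix.cons_val_succ, Pi.zero_apply] at this
        linear_combination -this
      · have := congrFun hMv 1
        simp only [hM, Matrix.mulVec, dotProduct, Fin.sum_univ_four,
          Matrix.cons_val', Matrix.cons_val_zero, Matrix.cons_val_one, Matrix.head_cons,
          Matrix.empty_val', Matrix.cons_val_fin_one, Matrix.head_fin_const,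
          Matrix.cons_val_two, Matrix.tail_cons, Matrix.cons_val_three,
          Matrix.of_apply, Matrix.cons_val_succ, Pi.zero_apply] at this
        linear_combination this
      · have := congrFun hMv 2
        simp only [hM, Matrix.mulVec, dotProduct, Fin.sum_univ_four,
          Matrix.cons_val', Matrix.cons_val_zero, Matrix.cons_val_one, Matrix.head_cons,
          Matrix.empty_val', Matrix.cons_val_fin_one, Matrix.head_fin_const,
          Matrix.cons_val_two, Matrix.tail_cons, Matrix.cons_val_three,
          Matrix.of_apply, Matrix.cons_val_succ, Pi.zero_apply] at this
        linear_combination -this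
      · have := congrFun hMv 3
        simp only [hM, Matrix.mulVec, dotProduct, Fin.sum_univ_four,
          Matrix.cons_val', Matrix.cons_val_zero, Matrix.cons_val_one, Matrix.head_cons,
          Matrix.empty_val', Matrix.cons_val_fin_one, Matrix.head_fin_const,
          Matrix.cons_val_two, Matrix.tail_cons, Matrix.cons_val_three,
          Matrix.of_apply, Matrix.cons_val_succ, Pi.zero_apply] at this
        linear_combination this
  rw [key, Matrix.exists_mulVec_eq_zero_iff]
  have hdet : M.det =
      4 * ((((β₁ : ℂ) + β₂) * k + 2 * Complex.I) * Complex.sin (k * (ℓ₁ + ℓ₂))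
      + 2 * (1 - Complex.cos (k * ℓ₁) * Complex.cos (k * ℓ₂))
      + (3 - (β₁ : ℂ) * β₂ * k ^ 2 - Complex.I * k * ((β₁ : ℂ) + β₂))
        * Complex.sin (k * ℓ₁) * Complex.sin (k * ℓ₂)) := by
    have hsum : Complex.I * k * ((ℓ₁ : ℂ) + ℓ₂) = Complex.I * k * ℓ₁ + Complex.I * k * ℓ₂ := by
      ring
    have h12 : Complex.exp (Complex.I * (k * ((ℓ₁ : ℂ) + ℓ₂))) = E₁ * E₂ := by
      rw [hE₁, hE₂, ← Complex.exp_add, ← hsum]; ring_nf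
    have h12' : Complex.exp (-(Complex.I * (k * ((ℓ₁ : ℂ) + ℓ₂)))) = F₁ * F₂ := by
      rw [hF₁, hF₂, ← Complex.exp_add]
      congr 1
      rw [show -(Complex.I * k * ℓ₁) + -(Complex.I * k * ℓ₂)
        = -(Complex.I * k * ((ℓ₁:ℂ) + ℓ₂)) by ring, hsum]
      ring_nf
    rw [hM]
    simp only [Matrix.det_succ_row_zero, Fin.sum_univ_succ, Matrix.det_fin_one,
      Matrix.submatrix_apply, Fin.succ_zero_eq_one, Fin.succ_one_eq_two,
      Matrix.cons_val', Matrix.cons_val_zero, Matrix.cons_val_one, Matrix.head_cons,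
      Matrix.empty_val', Matrix.cons_val_fin_one, Matrix.head_fin_const,
      Matrix.cons_val_two, Matrix.tail_cons, Matrix.of_apply, Matrix.cons_val_succ,
      Fin.val_zero, Fin.val_succ, pow_succ, pow_zero, Finset.univ_unique,
      Finset.sum_singleton, Fin.sum_univ_zero, Fin.succAbove, Fin.castSucc, Fin.castAdd,
      Fin.castLE, Fin.lt_def, Matrix.cons_val_fin_one]
    norm_num
    push_cast
    rw [sin_expand, sin_expand, sin_expand, cos_expand, cos_expand, h12, h12',
      show Complex.I * (k * (ℓ₁ : ℂ)) = Complex.I * k * ℓ₁ by ring,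
      show Complex.I * (k * (ℓ₂ : ℂ)) = Complex.I * k * ℓ₂ by ring,
      ← hE₁, ← hE₂, ← hF₁, ← hF₂]
    linear_combination (4:ℂ) * hEF₁ + (4:ℂ) * hEF₂ +
      ((-7:ℂ)*F₁*F₂ + F₁*F₂*k*(β₂:ℂ)*Complex.I + F₁*F₂*k*(β₁:ℂ)*Complex.I
        + (3:ℂ)*F₁*E₂ - F₁*E₂*k*(β₂:ℂ)*Complex.I - F₁*E₂*k*(β₁:ℂ)*Complex.I
        + (3:ℂ)*E₁*F₂ - E₁*F₂*k*(β₂:ℂ)*Complex.I - E₁*F₂*k*(β₁:ℂ)*Complex.I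
        + E₁*E₂ + E₁*E₂*k*(β₂:ℂ)*Complex.I + E₁*E₂*k*(β₁:ℂ)*Complex.I) * Complex.I_sq
  rw [hdet, mul_eq_zero]
  simp
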